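/- Let q ≥ 2, m ≥ 2, d ≥ 2 with d < m, let {I₁,…,I_d} be a partition of {1,…,m} with |I_α| = m_α, and let π_α : {1,…,m_α} → I_α be bijections. Let f(x) = Σ_α Σ_{β=1}^{m_α-1} a_{α,β} x_{π_α(β)} x_{π_α(β+1)} + Σ_{l=1}^{q-1} Σ_{u=1}^{m} h_{u,l} x_u^l + h₀ with each a_{α,β} coprime to q and h_{u,l}, h₀ ∈ ℤ_q, and for 0 ≤ n, p ≤ q^d - 1 with q-ary digits (n₁,…,n_d), (p₁,…,p_d) define f^p_n(x) = f(x) + Σ_α n_α x_{π_α(1)} + Σ_α p_α x_{π_α(m_α)}. Let F^p = {f^p_0,…,f^p_{q^d-1}} denote the corresponding sets of length-q^m sequences over ℤ_q (evaluating at q-ary digit vectors). Then {F^0,…,F^{q^d-1}} is a (q^d, q^d, q^m) complete complementary code: for all 0 ≤ p, p' ≤ q^d - 1 and all shifts τ with (p,τ) ≠ (p',0) and |τ| ≤ q^m - 1, Σ_{n=0}^{q^d-1} R_{f^p_n, f^{p'}_n}(τ) = 0. -/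

import Mathlib

open Finset Complex

/-- The primitive `q`-th root of unity `ξ = e^{2πi/q}`. -/
noncomputable def xiq (q : ℕ) : ℂ := Complex.exp (2 * Real.pi * Complex.I / q)

/-- The complex value `ξ^x` attached to `x ∈ ℤ_q`. -/
noncomputable def ec (q : ℕ) (x : ZMod q) : ℂ := xiq q ^ x.val

/-- The `k`-th `q`-ary digit (1-indexed) of the natural number `i`. -/
def dig (q i k : ℕ) : ℕ := i / q ^ (k - 1) % q

/-- Aperiodic cross-correlation of two length-`len` `ℤ_q`-valued sequences at shift `τ`. -/
noncomputable def Rq (q len : ℕ) (a b : ℕ → ZMod q) (τ : ℤ) : ℂ :=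
  if 0 ≤ τ then ∑ i ∈ Finset.range (len - τ.toNat), ec q (a i - b (i + τ.toNat))
  else ∑ i ∈ Finset.range (len - (-τ).toNat), ec q (a (i + (-τ).toNat) - b i)

/-- The EBF `f^p_n` of Theorem 8, evaluated at the `q`-ary digit vector of `i`. -/
def fpn (q m d : ℕ) (mα : ℕ → ℕ) (π : ℕ → ℕ → ℕ) (a : ℕ → ℕ → ℕ)
    (h : ℕ → ℕ → ZMod q) (h0 : ZMod q) (p n i : ℕ) : ZMod q :=
  (∑ α ∈ Finset.Icc 1 d, ∑ β ∈ Finset.Icc 1 (mα α - 1),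
      (a α β : ZMod q) * (dig q i (π α β) : ZMod q) * (dig q i (π α (β + 1)) : ZMod q))
  + (∑ l ∈ Finset.Icc 1 (q - 1), ∑ u' ∈ Finset.Icc 1 m,
      h u' l * (dig q i u' : ZMod q) ^ l) + h0
  + (∑ α ∈ Finset.Icc 1 d, (dig q n α : ZMod q) * (dig q i (π α 1) : ZMod q))
  + (∑ α ∈ Finset.Icc 1 d, (dig q p α : ZMod q) * (dig q i (π α (mα α)) : ZMod q))

section basic
variable {q : ℕ} (hq : 2 ≤ q)

lemma xiq_pow_q (hq : 2 ≤ q) : xiq q ^ q = 1 := by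
  have hq0 : (q : ℂ) ≠ 0 := by exact_mod_cast (by omega : q ≠ 0)
  rw [xiq, ← Complex.exp_nat_mul]
  rw [show (q:ℂ) * (2 * ↑Real.pi * Complex.I / ↑q) = 2 * ↑Real.pi * Complex.I * (↑q / ↑q) by ring,
    div_self hq0, mul_one]
  exact Complex.exp_two_pi_mul_I

lemma xiq_pow_mod (hq : 2 ≤ q) (n : ℕ) : xiq q ^ (n % q) = xiq q ^ n := by
  conv_rhs => rw [← Nat.mod_add_div n q]
  rw [pow_add, pow_mul, xiq_pow_q hq, one_pow, mul_one]

lemma ec_natCast (hq : 2 ≤ q) (n : ℕ) : ec q ((n : ZMod q)) = xiq q ^ n := by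
  haveI : NeZero q := ⟨by omega⟩
  rw [ec, ZMod.val_natCast, xiq_pow_mod hq]

lemma ec_add (hq : 2 ≤ q) (x y : ZMod q) : ec q (x + y) = ec q x * ec q y := by
  haveI : NeZero q := ⟨by omega⟩
  rw [ec, ec, ec, ZMod.val_add, xiq_pow_mod hq, pow_add]

lemma ec_zero (hq : 2 ≤ q) : ec q 0 = 1 := by
  haveI : NeZero q := ⟨by omega⟩
  simp [ec, ZMod.val_zero]

lemma ec_sum (hq : 2 ≤ q) {ι : Type*} (s : Finset ι) (f : ι → ZMod q) :
    ec q (∑ x ∈ s, f x) = ∏ x ∈ s, ec q (f x) := by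
  classical
  induction s using Finset.induction_on with
  | empty => simp [ec_zero hq]
  | insert a s' hx ih => simp [Finset.sum_insert hx, Finset.prod_insert hx, ec_add hq, ih]

lemma geom_zero (hq : 2 ≤ q) {c : ZMod q} (hc : c ≠ 0) :
    ∑ y ∈ Finset.range q, ec q ((y : ZMod q) * c) = 0 := by
  haveI : NeZero q := ⟨by omega⟩
  have hprim : IsPrimitiveRoot (xiq q) q := by
    simpa [xiq, mul_comm, mul_div_assoc] using Complex.isPrimitiveRoot_exp q (by omega)
  have hvc : 0 < c.val := Nat.pos_of_ne_zero (fun h0 => hc (by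
    exact (ZMod.val_eq_zero c).mp h0))
  set ζ := xiq q ^ c.val with hζ
  have hζ1 : ζ ≠ 1 := hprim.pow_ne_one_of_pos_of_lt hvc.ne' (c.val_lt)
  have hterm : ∀ y : ℕ, ec q ((y : ZMod q) * c) = ζ ^ y := by
    intro y
    have : ((y : ZMod q) * c) = ((y * c.val : ℕ) : ZMod q) := by
      push_cast [ZMod.natCast_val, ZMod.cast_id]; ring
    rw [this, ec_natCast hq, hζ, ← pow_mul, mul_comm]
  simp only [hterm]
  have := geom_sum_eq hζ1 q
  rw [this, hζ, ← pow_mul, mul_comm c.val q, pow_mul, xiq_pow_q hq, one_pow, sub_self, zero_div]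

end basic

section digits
variable {q : ℕ}

lemma dig_lt (hq : 2 ≤ q) (i k : ℕ) : dig q i k < q := Nat.mod_lt _ (by omega)

/-- replace digit at position w (1-indexed) by y -/
def rep (q i w y : ℕ) : ℕ := i % q ^ (w - 1) + y * q ^ (w - 1) + i / q ^ w * q ^ w

lemma rep_div_pow (hq : 2 ≤ q) (i w y : ℕ) (hw : 1 ≤ w) (hy : y < q) :
    rep q i w y / q ^ w = i / q ^ w := by
  have hlow : i % q ^ (w - 1) + y * q ^ (w - 1) < q ^ w := by
    have h1 : i % q ^ (w - 1) < q ^ (w - 1) := Nat.mod_lt _ (Nat.pow_pos (by omega))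
    have h2 : y * q ^ (w - 1) ≤ (q - 1) * q ^ (w - 1) := Nat.mul_le_mul_right _ (by omega)
    have : q ^ w = q * q ^ (w - 1) := by
      rw [← pow_succ']; congr 1; omega
    nlinarith [Nat.pow_pos (n := w-1) (show 0 < q by omega)]
  rw [rep, Nat.add_mul_div_right _ _ (Nat.pow_pos (n := w) (by omega)), Nat.div_eq_of_lt hlow,
    zero_add]

lemma rep_mod_pow (hq : 2 ≤ q) (i w y : ℕ) : rep q i w y % q ^ (w - 1) = i % q ^ (w - 1) := by
  have hd : q ^ (w - 1) ∣ y * q ^ (w - 1) + i / q ^ w * q ^ w :=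
    Nat.dvd_add (Dvd.intro_left y rfl) (Dvd.dvd.mul_left (pow_dvd_pow q (by omega)) _)
  obtain ⟨c, hc⟩ := hd
  rw [rep, add_assoc, hc, mul_comm, Nat.add_mul_mod_self_right, Nat.mod_mod_of_dvd i dvd_rfl]

lemma dig_rep_self (hq : 2 ≤ q) (i w y : ℕ) (hw : 1 ≤ w) (hy : y < q) :
    dig q (rep q i w y) w = y := by
  have : rep q i w y = i % q ^ (w - 1) + (y + q * (i / q ^ w)) * q ^ (w - 1) := by
    rw [rep]; ring_nf
    have : q ^ w = q ^ (w-1) * q := by rw [← pow_succ]; congr 1; omega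
    rw [this]; ring
  rw [dig, this, Nat.add_mul_div_right _ _ (Nat.pow_pos (by omega)),
    Nat.div_eq_of_lt (Nat.mod_lt _ (Nat.pow_pos (by omega))), zero_add,
    Nat.add_mul_mod_self_left, Nat.mod_eq_of_lt hy]

lemma rep_dig_eq (hq : 2 ≤ q) (i w : ℕ) (hw : 1 ≤ w) : rep q i w (dig q i w) = i := by
  rw [rep, dig]
  have h1 : i % q ^ w = i % q ^ (w - 1) + i / q ^ (w-1) % q * q ^ (w - 1) := by
    conv_lhs => rw [show w = (w - 1) + 1 by omega, Nat.mod_pow_succ]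
    ring
  have h2 := Nat.mod_add_div' i (q ^ w)
  omega

end digits

section digits2
variable {q : ℕ}

lemma dig_mod_pow (hq : 2 ≤ q) (i a k : ℕ) (hk : 1 ≤ k) (hka : k ≤ a) :
    dig q (i % q ^ a) k = dig q i k := by
  rw [dig, dig]
  conv_rhs => rw [← Nat.mod_add_div i (q ^ a)]
  have h1 : q ^ a = q ^ (a - k + 1) * q ^ (k - 1) := by rw [← pow_add]; congr 1; omega
  rw [h1, mul_comm (q ^ (a - k + 1)), mul_assoc,
    Nat.add_mul_div_left _ _ (Nat.pow_pos (by omega))]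
  have h2 : q ^ (a - k + 1) * (i / (q ^ (k - 1) * q ^ (a - k + 1))) =
      (q ^ (a - k) * (i / (q ^ (k - 1) * q ^ (a - k + 1)))) * q := by
    rw [show a - k + 1 = (a-k) + 1 by omega, pow_succ]; ring
  rw [h2, Nat.add_mul_mod_self_right]

lemma dig_div_pow (hq : 2 ≤ q) (i w k : ℕ) (hk : 1 ≤ k) :
    dig q (i / q ^ w) k = dig q i (k + w) := by
  rw [dig, dig, Nat.div_div_eq_div_mul, ← pow_add,
    show w + (k-1) = k + w - 1 from by omega]

lemma dig_rep_ne (hq : 2 ≤ q) (i w y k : ℕ) (hw : 1 ≤ w) (hy : y < q) (hk : 1 ≤ k)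
    (hne : k ≠ w) : dig q (rep q i w y) k = dig q i k := by
  rcases lt_or_gt_of_ne hne with hlt | hgt
  · rw [← dig_mod_pow hq (rep q i w y) (w-1) k hk (by omega), rep_mod_pow hq,
      dig_mod_pow hq i (w-1) k hk (by omega)]
  · have hkw : k = (k - w) + w := by omega
    rw [hkw, ← dig_div_pow hq _ w _ (by omega), rep_div_pow hq i w y hw hy,
      dig_div_pow hq _ w _ (by omega)]

lemma rep_lt (hq : 2 ≤ q) {i m w y : ℕ} (hi : i < q ^ m) (hw : 1 ≤ w) (hwm : w ≤ m)
    (hy : y < q) : rep q i w y < q ^ m := by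
  have hlow : i % q ^ (w - 1) + y * q ^ (w - 1) < q ^ w := by
    have h1 : i % q ^ (w - 1) < q ^ (w - 1) := Nat.mod_lt _ (Nat.pow_pos (by omega))
    have h2 : y * q ^ (w - 1) ≤ (q - 1) * q ^ (w - 1) := Nat.mul_le_mul_right _ (by omega)
    have h3 : q ^ w = q * q ^ (w - 1) := by rw [← pow_succ']; congr 1; omega
    nlinarith [Nat.pow_pos (n := w-1) (show 0 < q by omega)]
  have hdiv : i / q ^ w < q ^ (m - w) := by
    apply Nat.div_lt_of_lt_mul
    calc i < q ^ m := hi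
    _ = q ^ w * q ^ (m - w) := by rw [← pow_add]; congr 1; omega
  have : q ^ m = q ^ (m - w) * q ^ w := by rw [← pow_add]; congr 1; omega
  rw [rep, this]
  nlinarith [Nat.pow_pos (n := w) (show 0 < q by omega)]

lemma rep_key (hq : 2 ≤ q) (i w y : ℕ) (hw : 1 ≤ w) :
    rep q i w y + dig q i w * q ^ (w - 1) = i + y * q ^ (w - 1) := by
  have h1 := rep_dig_eq hq i w hw
  rw [rep] at h1 ⊢
  omega

lemma rep_add (hq : 2 ≤ q) (i t w y : ℕ) (hw : 1 ≤ w)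
    (hdig : dig q i w = dig q (i + t) w) : rep q i w y + t = rep q (i + t) w y := by
  have h1 := rep_key hq i w y hw
  have h2 := rep_key hq (i + t) w y hw
  rw [← hdig] at h2
  omega

lemma rep_rep (hq : 2 ≤ q) (i w y z : ℕ) (hw : 1 ≤ w) (hy : y < q) :
    rep q (rep q i w y) w z = rep q i w z := by
  rw [rep, rep_mod_pow hq, rep_div_pow hq i w y hw hy]; rfl

lemma digits_inj (hq : 2 ≤ q) : ∀ (m i j : ℕ), i < q ^ m → j < q ^ m →
    (∀ k, 1 ≤ k → k ≤ m → dig q i k = dig q j k) → i = j := by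
  intro m
  induction m with
  | zero => intro i j hi hj _; simp at hi hj; omega
  | succ m ih =>
    intro i j hi hj hdig
    have h1 : dig q i 1 = i % q := by simp [dig]
    have h2 : dig q j 1 = j % q := by simp [dig]
    have hmod : i % q = j % q := by rw [← h1, ← h2]; exact hdig 1 le_rfl (by omega)
    have hdiv : i / q = j / q := by
      apply ih
      · exact Nat.div_lt_of_lt_mul (by rw [← pow_succ']; exact hi)
      · exact Nat.div_lt_of_lt_mul (by rw [← pow_succ']; exact hj)
      · intro k hk1 hkm
        have e1 : dig q (i / q) k = dig q i (k + 1) := by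
          have := dig_div_pow hq i 1 k hk1; rwa [pow_one] at this
        have e2 : dig q (j / q) k = dig q j (k + 1) := by
          have := dig_div_pow hq j 1 k hk1; rwa [pow_one] at this
        rw [e1, e2]; exact hdig (k+1) (by omega) (by omega)
    have d1 := Nat.div_add_mod i q
    have d2 := Nat.div_add_mod j q
    rw [hdiv] at d1
    omega
end digits2

lemma digit_prod_sum {q : ℕ} (hq : 2 ≤ q) (D : ℕ) (g : ℕ → ℕ → ℂ) :
    ∑ n ∈ Finset.range (q ^ D), ∏ α ∈ Finset.Icc 1 D, g α (dig q n α)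
      = ∏ α ∈ Finset.Icc 1 D, ∑ x ∈ Finset.range q, g α x := by
  induction D generalizing g with
  | zero => simp
  | succ D ih =>
    have hqD : 0 < q ^ D := Nat.pow_pos (by omega)
    have hsplit : ∑ n ∈ range (q ^ (D+1)), ∏ α ∈ Icc 1 (D+1), g α (dig q n α)
        = ∑ p ∈ (range (q ^ D)) ×ˢ (range q), ∏ α ∈ Icc 1 (D+1),
            g α (dig q (p.1 + p.2 * q ^ D) α) := by
      apply Finset.sum_bij' (i := fun n _ => (n % q ^ D, n / q ^ D))
        (j := fun p _ => p.1 + p.2 * q ^ D)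
      · intro n hn
        simp only [mem_range] at hn
        simp only [mem_product, mem_range]
        refine ⟨Nat.mod_lt _ hqD, ?_⟩
        apply Nat.div_lt_of_lt_mul; rw [← pow_succ]; exact hn
      · intro p hp
        simp only [mem_product, mem_range] at hp
        have h1 : p.1 + p.2 * q ^ D < (p.2 + 1) * q ^ D := by nlinarith [hp.1, hp.2]
        have h2 : (p.2 + 1) * q ^ D ≤ q * q ^ D := Nat.mul_le_mul_right _ (by omega)
        simp only [mem_range]
        calc p.1 + p.2 * q ^ D < (p.2+1) * q ^ D := h1
          _ ≤ q * q ^ D := h2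
          _ = q ^ (D+1) := by rw [pow_succ]; ring
      · intro n _; simp [Nat.mod_add_div']
      · intro p hp
        simp only [mem_product, mem_range] at hp
        simp [Nat.add_mul_mod_self_right, Nat.mod_eq_of_lt hp.1,
          Nat.add_mul_div_right _ _ hqD, Nat.div_eq_of_lt hp.1]
      · intro n _
        conv_lhs => rw [← Nat.mod_add_div' n (q ^ D)]
    rw [hsplit, Finset.sum_product]
    have hinner : ∀ lo ∈ range (q ^ D), ∀ hi ∈ range q,
        ∏ α ∈ Icc 1 (D+1), g α (dig q (lo + hi * q ^ D) α)
          = (∏ α ∈ Icc 1 D, g α (dig q lo α)) * g (D+1) hi := by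
      intro lo hlo hi hhi
      simp only [mem_range] at hlo hhi
      rw [Finset.prod_Icc_succ_top (by omega)]
      congr 1
      · apply Finset.prod_congr rfl
        intro α hα
        simp only [mem_Icc] at hα
        congr 1
        rw [← dig_mod_pow hq (lo + hi * q ^ D) D α hα.1 hα.2,
          Nat.add_mul_mod_self_right, Nat.mod_eq_of_lt hlo]
      · congr 1
        rw [show D + 1 = 1 + D from by omega, ← dig_div_pow hq _ D 1 le_rfl,
          Nat.add_mul_div_right _ _ hqD, Nat.div_eq_of_lt hlo, zero_add]
        simp [dig, Nat.mod_eq_of_lt hhi]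
    calc ∑ lo ∈ range (q ^ D), ∑ hi ∈ range q, ∏ α ∈ Icc 1 (D+1), g α (dig q (lo + hi * q ^ D) α)
        = ∑ lo ∈ range (q ^ D), ∑ hi ∈ range q, (∏ α ∈ Icc 1 D, g α (dig q lo α)) * g (D+1) hi := by
          apply Finset.sum_congr rfl; intro lo hlo; apply Finset.sum_congr rfl; intro hi hhi
          exact hinner lo hlo hi hhi
      _ = (∑ lo ∈ range (q ^ D), ∏ α ∈ Icc 1 D, g α (dig q lo α)) * ∑ hi ∈ range q, g (D+1) hi := by
          rw [Finset.sum_mul_sum]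
      _ = (∏ α ∈ Icc 1 D, ∑ x ∈ range q, g α x) * ∑ hi ∈ range q, g (D+1) hi := by rw [ih]
      _ = ∏ α ∈ Icc 1 (D+1), ∑ x ∈ range q, g α x := by rw [Finset.prod_Icc_succ_top (by omega)]


section wposdef

def bset (q : ℕ) (mα : ℕ → ℕ) (π : ℕ → ℕ → ℕ) (I J α0 : ℕ) : Finset ℕ :=
  (Finset.Icc 1 (mα α0)).filter (fun β => dig q I (π α0 β) ≠ dig q J (π α0 β))

def aset (q d : ℕ) (mα : ℕ → ℕ) (π : ℕ → ℕ → ℕ) (I J : ℕ) : Finset ℕ :=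
  (Finset.Icc 1 d).filter (fun α => (bset q mα π I J α).Nonempty)

def apos (q d : ℕ) (mα : ℕ → ℕ) (π : ℕ → ℕ → ℕ) (I J : ℕ) : ℕ :=
  if h : (aset q d mα π I J).Nonempty then (aset q d mα π I J).min' h else 1

def bpos (q d : ℕ) (mα : ℕ → ℕ) (π : ℕ → ℕ → ℕ) (I J : ℕ) : ℕ :=
  if h : (bset q mα π I J (apos q d mα π I J)).Nonempty
  then (bset q mα π I J (apos q d mα π I J)).min' h else 1

def wpos (q d : ℕ) (mα : ℕ → ℕ) (π : ℕ → ℕ → ℕ) (I J : ℕ) : ℕ :=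
  π (apos q d mα π I J) (bpos q d mα π I J - 1)

variable {q d : ℕ} {mα : ℕ → ℕ} {π : ℕ → ℕ → ℕ} {I J : ℕ}

lemma apos_mem (h : (aset q d mα π I J).Nonempty) :
    apos q d mα π I J ∈ aset q d mα π I J := by
  rw [apos, dif_pos h]; exact Finset.min'_mem _ h

lemma bset_nonempty (h : (aset q d mα π I J).Nonempty) :
    (bset q mα π I J (apos q d mα π I J)).Nonempty := by
  have := apos_mem h
  rw [aset, Finset.mem_filter] at this
  exact this.2

lemma bpos_mem (h : (aset q d mα π I J).Nonempty) :
    bpos q d mα π I J ∈ bset q mα π I J (apos q d mα π I J) := by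
  rw [bpos, dif_pos (bset_nonempty h)]; exact Finset.min'_mem _ _

lemma bpos_min (h : (aset q d mα π I J).Nonempty) :
    ∀ β ∈ Finset.Icc 1 (mα (apos q d mα π I J)), β < bpos q d mα π I J →
      dig q I (π (apos q d mα π I J) β) = dig q J (π (apos q d mα π I J) β) := by
  intro β hβ hlt
  by_contra hne
  have hmem : β ∈ bset q mα π I J (apos q d mα π I J) := by
    rw [bset, Finset.mem_filter]; exact ⟨hβ, hne⟩
  have := Finset.min'_le _ β hmem
  rw [bpos, dif_pos (bset_nonempty h)] at hlt
  omega

lemma apos_Icc (h : (aset q d mα π I J).Nonempty) : apos q d mα π I J ∈ Finset.Icc 1 d := by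
  have := apos_mem h; rw [aset, Finset.mem_filter] at this; exact this.1

lemma bpos_Icc (h : (aset q d mα π I J).Nonempty) :
    bpos q d mα π I J ∈ Finset.Icc 1 (mα (apos q d mα π I J)) := by
  have := bpos_mem h; rw [bset, Finset.mem_filter] at this; exact this.1

lemma bpos_ne (h : (aset q d mα π I J).Nonempty) :
    dig q I (π (apos q d mα π I J) (bpos q d mα π I J)) ≠
      dig q J (π (apos q d mα π I J) (bpos q d mα π I J)) := by
  have := bpos_mem h; rw [bset, Finset.mem_filter] at this; exact this.2

lemma aset_congr {I' J' : ℕ}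
    (hpat : ∀ α ∈ Finset.Icc 1 d, ∀ β ∈ Finset.Icc 1 (mα α),
      (dig q I (π α β) = dig q J (π α β) ↔ dig q I' (π α β) = dig q J' (π α β))) :
    aset q d mα π I J = aset q d mα π I' J' := by
  rw [aset, aset]
  apply Finset.filter_congr
  intro α hα
  have : bset q mα π I J α = bset q mα π I' J' α := by
    rw [bset, bset]
    apply Finset.filter_congr
    intro β hβ
    exact not_iff_not.mpr (hpat α hα β hβ)
  rw [this]

lemma wpos_congr {I' J' : ℕ}
    (hpat : ∀ α ∈ Finset.Icc 1 d, ∀ β ∈ Finset.Icc 1 (mα α),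
      (dig q I (π α β) = dig q J (π α β) ↔ dig q I' (π α β) = dig q J' (π α β)))
    (h : (aset q d mα π I J).Nonempty) :
    apos q d mα π I J = apos q d mα π I' J' ∧
    bpos q d mα π I J = bpos q d mα π I' J' ∧
    wpos q d mα π I J = wpos q d mα π I' J' := by
  have ha : aset q d mα π I J = aset q d mα π I' J' := aset_congr hpat
  have hap : apos q d mα π I J = apos q d mα π I' J' := by rw [apos, apos, ha]
  have hb : bset q mα π I J (apos q d mα π I J) =
      bset q mα π I' J' (apos q d mα π I' J') := by
    rw [← hap, bset, bset]
    apply Finset.filter_congr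
    intro β hβ
    exact not_iff_not.mpr (hpat _ (apos_Icc h) β hβ)
  have hbp : bpos q d mα π I J = bpos q d mα π I' J' := by rw [bpos, bpos, hb]
  exact ⟨hap, hbp, by rw [wpos, wpos, hap, hbp]⟩

end wposdef

lemma aset_nonempty_of {q d : ℕ} {mα : ℕ → ℕ} {π : ℕ → ℕ → ℕ} {I J α β : ℕ}
    (hα : α ∈ Finset.Icc 1 d) (hβ : β ∈ Finset.Icc 1 (mα α))
    (hne : dig q I (π α β) ≠ dig q J (π α β)) : (aset q d mα π I J).Nonempty :=
  ⟨α, by rw [aset, Finset.mem_filter]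
         exact ⟨hα, ⟨β, by rw [bset, Finset.mem_filter]; exact ⟨hβ, hne⟩⟩⟩⟩

lemma pi_surj {d m : ℕ} {mα : ℕ → ℕ} {π : ℕ → ℕ → ℕ}
    (hsum : ∑ α ∈ Finset.Icc 1 d, mα α = m)
    (hrange : ∀ α ∈ Finset.Icc 1 d, ∀ β ∈ Finset.Icc 1 (mα α), π α β ∈ Finset.Icc 1 m)
    (hinj : ∀ α ∈ Finset.Icc 1 d, ∀ β ∈ Finset.Icc 1 (mα α), ∀ α' ∈ Finset.Icc 1 d,
      ∀ β' ∈ Finset.Icc 1 (mα α'), π α β = π α' β' → α = α' ∧ β = β') :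
    ∀ k ∈ Finset.Icc 1 m, ∃ α ∈ Finset.Icc 1 d, ∃ β ∈ Finset.Icc 1 (mα α), π α β = k := by
  classical
  set T : Finset ((_ : ℕ) × ℕ) := (Finset.Icc 1 d).sigma (fun α => Finset.Icc 1 (mα α)) with hT
  set f : ((_ : ℕ) × ℕ) → ℕ := fun x => π x.1 x.2 with hf
  have hsub : T.image f ⊆ Finset.Icc 1 m := by
    intro k hk
    rw [Finset.mem_image] at hk
    obtain ⟨x, hx, rfl⟩ := hk
    rw [hT, Finset.mem_sigma] at hx
    exact hrange x.1 hx.1 x.2 hx.2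
  have hcardT : T.card = m := by
    rw [hT, Finset.card_sigma]
    rw [← hsum]
    apply Finset.sum_congr rfl
    intro α _
    rw [Nat.card_Icc]
    omega
  have hinjOn : Set.InjOn f ↑T := by
    intro x hx y hy hxy
    rw [Finset.mem_coe, hT, Finset.mem_sigma] at hx hy
    obtain ⟨h1, h2⟩ := hinj x.1 hx.1 x.2 hx.2 y.1 hy.1 y.2 hy.2 hxy
    exact Sigma.ext h1 (heq_of_eq h2)
  have hcard : (T.image f).card = m := by rw [Finset.card_image_of_injOn hinjOn, hcardT]
  have heq : T.image f = Finset.Icc 1 m := by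
    apply Finset.eq_of_subset_of_card_le hsub
    rw [hcard, Nat.card_Icc]
    omega
  intro k hk
  rw [← heq, Finset.mem_image] at hk
  obtain ⟨x, hx, rfl⟩ := hk
  rw [hT, Finset.mem_sigma] at hx
  exact ⟨x.1, hx.1, x.2, hx.2, rfl⟩

lemma fpn_rep_diff (q m d : ℕ) (hq : 2 ≤ q) (mα : ℕ → ℕ) (π : ℕ → ℕ → ℕ) (a : ℕ → ℕ → ℕ)
    (h : ℕ → ℕ → ZMod q) (h0 : ZMod q)
    (hmα : ∀ α ∈ Finset.Icc 1 d, 1 ≤ mα α)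
    (hrange : ∀ α ∈ Finset.Icc 1 d, ∀ β ∈ Finset.Icc 1 (mα α), π α β ∈ Finset.Icc 1 m)
    (hinj : ∀ α ∈ Finset.Icc 1 d, ∀ β ∈ Finset.Icc 1 (mα α), ∀ α' ∈ Finset.Icc 1 d,
      ∀ β' ∈ Finset.Icc 1 (mα α'), π α β = π α' β' → α = α' ∧ β = β')
    (p1 p2 X Y α0 β0 y : ℕ)
    (hα0 : α0 ∈ Finset.Icc 1 d) (hβ0 : β0 ∈ Finset.Icc 1 (mα α0)) (hβ2 : 2 ≤ β0)
    (hagree : ∀ β ∈ Finset.Icc 1 (mα α0), β < β0 → dig q X (π α0 β) = dig q Y (π α0 β))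
    (hy : y < q)
    (hX0 : dig q X (π α0 (β0 - 1)) = 0) (hY0 : dig q Y (π α0 (β0 - 1)) = 0) :
    fpn q m d mα π a h h0 p1 0 (rep q X (π α0 (β0-1)) y)
      - fpn q m d mα π a h h0 p2 0 (rep q Y (π α0 (β0-1)) y)
      = (fpn q m d mα π a h h0 p1 0 X - fpn q m d mα π a h h0 p2 0 Y)
        + (y : ZMod q) * (a α0 (β0-1) : ZMod q) *
          ((dig q X (π α0 β0) : ZMod q) - (dig q Y (π α0 β0) : ZMod q)) := by
  classical
  set w := π α0 (β0 - 1) with hw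
  rw [Finset.mem_Icc] at hα0 hβ0
  have hβ0m1 : β0 - 1 ∈ Finset.Icc 1 (mα α0) := by rw [Finset.mem_Icc]; omega
  have hβ0m : β0 ∈ Finset.Icc 1 (mα α0) := by rw [Finset.mem_Icc]; omega
  have hα0m : α0 ∈ Finset.Icc 1 d := by rw [Finset.mem_Icc]; omega
  have hwm : w ∈ Finset.Icc 1 m := hrange α0 hα0m _ hβ0m1
  have hw1 : 1 ≤ w := by rw [Finset.mem_Icc] at hwm; exact hwm.1
  -- the digit positions of rep
  have hdig : ∀ (Z u : ℕ), 1 ≤ u → u ≠ w → dig q (rep q Z w y) u = dig q Z u := by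
    intro Z u hu hne
    exact dig_rep_ne hq Z w y u hw1 hy hu hne
  have hdigw : ∀ (Z : ℕ), dig q (rep q Z w y) w = y := by
    intro Z; exact dig_rep_self hq Z w y hw1 hy
  have hpos1 : ∀ α ∈ Finset.Icc 1 d, ∀ β ∈ Finset.Icc 1 (mα α),
      π α β = w → α = α0 ∧ β = β0 - 1 := by
    intro α hα β hβ he
    exact hinj α hα β hβ α0 hα0m (β0-1) hβ0m1 he
  have hπβ0 : π α0 β0 ≠ w := by
    intro he
    have := hpos1 α0 hα0m β0 hβ0m he
    omega
  -- quadratic part claim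
  have hQ : ∑ α ∈ Finset.Icc 1 d, ∑ β ∈ Finset.Icc 1 (mα α - 1),
      ((a α β : ZMod q) * (dig q (rep q X w y) (π α β) : ZMod q)
          * (dig q (rep q X w y) (π α (β + 1)) : ZMod q)
        - (a α β : ZMod q) * (dig q X (π α β) : ZMod q) * (dig q X (π α (β + 1)) : ZMod q)
        - ((a α β : ZMod q) * (dig q (rep q Y w y) (π α β) : ZMod q)
            * (dig q (rep q Y w y) (π α (β + 1)) : ZMod q)
          - (a α β : ZMod q) * (dig q Y (π α β) : ZMod q) * (dig q Y (π α (β + 1)) : ZMod q)))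
      = (y : ZMod q) * (a α0 (β0-1) : ZMod q) *
          ((dig q X (π α0 β0) : ZMod q) - (dig q Y (π α0 β0) : ZMod q)) := by
    rw [Finset.sum_eq_single_of_mem α0 hα0m]
    · rw [Finset.sum_eq_single_of_mem (β0 - 1) (by rw [Finset.mem_Icc]; omega)]
      · have e1 : dig q (rep q X w y) (π α0 (β0-1)) = y := hdigw X
        have e2 : dig q (rep q Y w y) (π α0 (β0-1)) = y := hdigw Y
        have hu : 1 ≤ π α0 β0 := by
          have := hrange α0 hα0m β0 hβ0m; rw [Finset.mem_Icc] at this; omega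
        have e3 : dig q (rep q X w y) (π α0 (β0-1+1)) = dig q X (π α0 β0) := by
          rw [show β0 - 1 + 1 = β0 from by omega]; exact hdig X _ hu hπβ0
        have e4 : dig q (rep q Y w y) (π α0 (β0-1+1)) = dig q Y (π α0 β0) := by
          rw [show β0 - 1 + 1 = β0 from by omega]; exact hdig Y _ hu hπβ0
        rw [e1, e2, e3, e4, hX0, hY0, show β0 - 1 + 1 = β0 from by omega]
        push_cast
        ring
      · intro β hβ hne
        rw [Finset.mem_Icc] at hβ
        have hβm : β ∈ Finset.Icc 1 (mα α0) := by rw [Finset.mem_Icc]; omega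
        have hβ1m : β + 1 ∈ Finset.Icc 1 (mα α0) := by rw [Finset.mem_Icc]; omega
        have h1 : π α0 β ≠ w := by
          intro he; have := hpos1 α0 hα0m β hβm he; omega
        have hu1 : 1 ≤ π α0 β := by
          have := hrange α0 hα0m β hβm; rw [Finset.mem_Icc] at this; omega
        have hu2 : 1 ≤ π α0 (β+1) := by
          have := hrange α0 hα0m (β+1) hβ1m; rw [Finset.mem_Icc] at this; omega
        by_cases h2 : π α0 (β+1) = w
        · -- β + 1 = β0 - 1
          have hb : β + 1 = β0 - 1 := (hpos1 α0 hα0m (β+1) hβ1m h2).2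
          have e1 : dig q (rep q X w y) (π α0 β) = dig q X (π α0 β) := hdig X _ hu1 h1
          have e2 : dig q (rep q Y w y) (π α0 β) = dig q Y (π α0 β) := hdig Y _ hu1 h1
          have e3 : dig q (rep q X w y) (π α0 (β+1)) = y := by rw [h2]; exact hdigw X
          have e4 : dig q (rep q Y w y) (π α0 (β+1)) = y := by rw [h2]; exact hdigw Y
          have e5 : dig q X (π α0 β) = dig q Y (π α0 β) := hagree β hβm (by omega)
          have e6 : dig q X (π α0 (β+1)) = dig q Y (π α0 (β+1)) := by
            rw [hb]; rw [hb] at h2; rw [h2, hX0, hY0]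
          rw [e1, e2, e3, e4, e5, e6]
          ring
        · have e1 : dig q (rep q X w y) (π α0 β) = dig q X (π α0 β) := hdig X _ hu1 h1
          have e2 : dig q (rep q Y w y) (π α0 β) = dig q Y (π α0 β) := hdig Y _ hu1 h1
          have e3 : dig q (rep q X w y) (π α0 (β+1)) = dig q X (π α0 (β+1)) :=
            hdig X _ hu2 h2
          have e4 : dig q (rep q Y w y) (π α0 (β+1)) = dig q Y (π α0 (β+1)) :=
            hdig Y _ hu2 h2
          rw [e1, e2, e3, e4]
          ring
    · intro α hα hne
      apply Finset.sum_eq_zero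
      intro β hβ
      rw [Finset.mem_Icc] at hβ
      have hβm : β ∈ Finset.Icc 1 (mα α) := by rw [Finset.mem_Icc]; omega
      have hβ1m : β + 1 ∈ Finset.Icc 1 (mα α) := by rw [Finset.mem_Icc]; omega
      have h1 : π α β ≠ w := by intro he; exact hne (hpos1 α hα β hβm he).1
      have h2 : π α (β+1) ≠ w := by intro he; exact hne (hpos1 α hα (β+1) hβ1m he).1
      have hu1 : 1 ≤ π α β := by
        have := hrange α hα β hβm; rw [Finset.mem_Icc] at this; omega
      have hu2 : 1 ≤ π α (β+1) := by
        have := hrange α hα (β+1) hβ1m; rw [Finset.mem_Icc] at this; omega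
      rw [hdig X _ hu1 h1, hdig Y _ hu1 h1, hdig X _ hu2 h2, hdig Y _ hu2 h2]
      ring
  -- h part claim
  have hH : ∑ l ∈ Finset.Icc 1 (q-1), ∑ u ∈ Finset.Icc 1 m,
      (h u l * (dig q (rep q X w y) u : ZMod q) ^ l - h u l * (dig q X u : ZMod q) ^ l
        - (h u l * (dig q (rep q Y w y) u : ZMod q) ^ l - h u l * (dig q Y u : ZMod q) ^ l))
      = 0 := by
    apply Finset.sum_eq_zero
    intro l _
    apply Finset.sum_eq_zero
    intro u hu
    rw [Finset.mem_Icc] at hu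
    by_cases he : u = w
    · rw [he, hdigw X, hdigw Y, hX0, hY0]
      ring
    · rw [hdig X u hu.1 he, hdig Y u hu.1 he]
      ring
  -- p parts
  have hPgen : ∀ (P Z : ℕ), ∑ α ∈ Finset.Icc 1 d,
      (dig q P α : ZMod q) * (dig q (rep q Z w y) (π α (mα α)) : ZMod q)
      = ∑ α ∈ Finset.Icc 1 d, (dig q P α : ZMod q) * (dig q Z (π α (mα α)) : ZMod q) := by
    intro P Z
    apply Finset.sum_congr rfl
    intro α hα
    have hm1 : mα α ∈ Finset.Icc 1 (mα α) := by
      rw [Finset.mem_Icc]; exact ⟨hmα α hα, le_rfl⟩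
    have hne : π α (mα α) ≠ w := by
      intro he
      obtain ⟨rfl, h2⟩ := hpos1 α hα (mα α) hm1 he
      omega
    have hu : 1 ≤ π α (mα α) := by
      have := hrange α hα (mα α) hm1; rw [Finset.mem_Icc] at this; omega
    rw [hdig Z _ hu hne]
  -- n = 0 part
  have hN : ∀ (Z : ℕ), ∑ α ∈ Finset.Icc 1 d,
      (dig q 0 α : ZMod q) * (dig q Z (π α 1) : ZMod q) = 0 := by
    intro Z
    apply Finset.sum_eq_zero
    intro α _
    simp [dig]
  -- now combine
  rw [fpn, fpn, fpn, fpn]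
  rw [hN (rep q X w y), hN (rep q Y w y), hN X, hN Y, hPgen p1 X, hPgen p2 Y]
  have hQ' : (∑ α ∈ Finset.Icc 1 d, ∑ β ∈ Finset.Icc 1 (mα α - 1),
        (a α β : ZMod q) * (dig q (rep q X w y) (π α β) : ZMod q)
          * (dig q (rep q X w y) (π α (β + 1)) : ZMod q))
      - (∑ α ∈ Finset.Icc 1 d, ∑ β ∈ Finset.Icc 1 (mα α - 1),
        (a α β : ZMod q) * (dig q X (π α β) : ZMod q) * (dig q X (π α (β + 1)) : ZMod q))
      - ((∑ α ∈ Finset.Icc 1 d, ∑ β ∈ Finset.Icc 1 (mα α - 1),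
        (a α β : ZMod q) * (dig q (rep q Y w y) (π α β) : ZMod q)
          * (dig q (rep q Y w y) (π α (β + 1)) : ZMod q))
      - (∑ α ∈ Finset.Icc 1 d, ∑ β ∈ Finset.Icc 1 (mα α - 1),
        (a α β : ZMod q) * (dig q Y (π α β) : ZMod q) * (dig q Y (π α (β + 1)) : ZMod q)))
      = (y : ZMod q) * (a α0 (β0-1) : ZMod q) *
          ((dig q X (π α0 β0) : ZMod q) - (dig q Y (π α0 β0) : ZMod q)) := by
    rw [← hQ, ← Finset.sum_sub_distrib, ← Finset.sum_sub_distrib, ← Finset.sum_sub_distrib]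
    apply Finset.sum_congr rfl
    intro α _
    rw [← Finset.sum_sub_distrib, ← Finset.sum_sub_distrib, ← Finset.sum_sub_distrib]
  have hH' : (∑ l ∈ Finset.Icc 1 (q-1), ∑ u ∈ Finset.Icc 1 m,
        h u l * (dig q (rep q X w y) u : ZMod q) ^ l)
      - (∑ l ∈ Finset.Icc 1 (q-1), ∑ u ∈ Finset.Icc 1 m, h u l * (dig q X u : ZMod q) ^ l)
      - ((∑ l ∈ Finset.Icc 1 (q-1), ∑ u ∈ Finset.Icc 1 m,
        h u l * (dig q (rep q Y w y) u : ZMod q) ^ l)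
      - (∑ l ∈ Finset.Icc 1 (q-1), ∑ u ∈ Finset.Icc 1 m, h u l * (dig q Y u : ZMod q) ^ l))
      = 0 := by
    rw [← hH, ← Finset.sum_sub_distrib, ← Finset.sum_sub_distrib, ← Finset.sum_sub_distrib]
    apply Finset.sum_congr rfl
    intro l _
    rw [← Finset.sum_sub_distrib, ← Finset.sum_sub_distrib, ← Finset.sum_sub_distrib]
  linear_combination hQ' + hH'

lemma natCast_zmod_inj {q : ℕ} (hq : 2 ≤ q) {x y : ℕ} (hx : x < q) (hy : y < q)
    (he : (x : ZMod q) = y) : x = y := by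
  haveI : NeZero q := ⟨by omega⟩
  have := congrArg ZMod.val he
  rwa [ZMod.val_cast_of_lt hx, ZMod.val_cast_of_lt hy] at this

lemma sum_ec_t0 (q m d : ℕ) (hq : 2 ≤ q) (mα : ℕ → ℕ)
    (hmα : ∀ α ∈ Finset.Icc 1 d, 1 ≤ mα α)
    (π : ℕ → ℕ → ℕ)
    (hrange : ∀ α ∈ Finset.Icc 1 d, ∀ β ∈ Finset.Icc 1 (mα α), π α β ∈ Finset.Icc 1 m)
    (hinj : ∀ α ∈ Finset.Icc 1 d, ∀ β ∈ Finset.Icc 1 (mα α), ∀ α' ∈ Finset.Icc 1 d,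
      ∀ β' ∈ Finset.Icc 1 (mα α'), π α β = π α' β' → α = α' ∧ β = β')
    (a : ℕ → ℕ → ℕ) (h : ℕ → ℕ → ZMod q) (h0 : ZMod q)
    (p p' : ℕ) (hp : p < q ^ d) (hp' : p' < q ^ d) (hpp : p ≠ p') :
    ∑ i ∈ Finset.range (q ^ m),
      ec q (fpn q m d mα π a h h0 p 0 i - fpn q m d mα π a h h0 p' 0 i) = 0 := by
  classical
  set c : ℕ → ZMod q := fun α => (dig q p α : ZMod q) - (dig q p' α : ZMod q) with hcdef
  have hB : ∀ i, fpn q m d mα π a h h0 p 0 i - fpn q m d mα π a h h0 p' 0 i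
      = ∑ α ∈ Finset.Icc 1 d, c α * (dig q i (π α (mα α)) : ZMod q) := by
    intro i
    rw [fpn, fpn]
    have hPP : (∑ α ∈ Finset.Icc 1 d, (dig q p α : ZMod q) * (dig q i (π α (mα α)) : ZMod q))
        - (∑ α ∈ Finset.Icc 1 d, (dig q p' α : ZMod q) * (dig q i (π α (mα α)) : ZMod q))
        = ∑ α ∈ Finset.Icc 1 d, c α * (dig q i (π α (mα α)) : ZMod q) := by
      rw [← Finset.sum_sub_distrib]
      exact Finset.sum_congr rfl fun α _ => by rw [hcdef]; ring
    linear_combination hPP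
  -- fiberwise rewrite to positions
  set c' : ℕ → ZMod q := fun u =>
    ∑ α ∈ (Finset.Icc 1 d).filter (fun α => π α (mα α) = u), c α with hc'def
  have hmaps : ∀ α ∈ Finset.Icc 1 d, π α (mα α) ∈ Finset.Icc 1 m := by
    intro α hα
    exact hrange α hα (mα α) (by rw [Finset.mem_Icc]; exact ⟨hmα α hα, le_rfl⟩)
  have hfib : ∀ i, ∑ α ∈ Finset.Icc 1 d, c α * (dig q i (π α (mα α)) : ZMod q)
      = ∑ u ∈ Finset.Icc 1 m, c' u * (dig q i u : ZMod q) := by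
    intro i
    rw [← Finset.sum_fiberwise_of_maps_to hmaps (fun α => c α * (dig q i (π α (mα α)) : ZMod q))]
    apply Finset.sum_congr rfl
    intro u _
    rw [hc'def, Finset.sum_mul]
    apply Finset.sum_congr rfl
    intro α hα
    rw [Finset.mem_filter] at hα
    rw [hα.2]
  have hsum2 : ∑ i ∈ Finset.range (q ^ m),
      ec q (fpn q m d mα π a h h0 p 0 i - fpn q m d mα π a h h0 p' 0 i)
      = ∏ u ∈ Finset.Icc 1 m, ∑ x ∈ Finset.range q, ec q (c' u * (x : ZMod q)) := by
    rw [← digit_prod_sum hq m (fun u x => ec q (c' u * (x : ZMod q)))]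
    apply Finset.sum_congr rfl
    intro i _
    rw [hB i, hfib i, ec_sum hq]
  rw [hsum2]
  -- find the differing digit of p, p'
  have hdiff : ∃ α, 1 ≤ α ∧ α ≤ d ∧ dig q p α ≠ dig q p' α := by
    by_contra hcon
    push_neg at hcon
    exact hpp (digits_inj hq d p p' hp hp' (fun k hk1 hk2 => hcon k hk1 hk2))
  obtain ⟨α', hα'1, hα'2, hα'ne⟩ := hdiff
  have hα'm : α' ∈ Finset.Icc 1 d := by rw [Finset.mem_Icc]; omega
  have hu' : π α' (mα α') ∈ Finset.Icc 1 m := hmaps α' hα'm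
  apply Finset.prod_eq_zero hu'
  have hfilter : (Finset.Icc 1 d).filter (fun α => π α (mα α) = π α' (mα α')) = {α'} := by
    apply Finset.eq_singleton_iff_unique_mem.mpr
    constructor
    · rw [Finset.mem_filter]; exact ⟨hα'm, rfl⟩
    · intro α hα
      rw [Finset.mem_filter] at hα
      exact (hinj α hα.1 (mα α) (by rw [Finset.mem_Icc]; exact ⟨hmα α hα.1, le_rfl⟩)
        α' hα'm (mα α') (by rw [Finset.mem_Icc]; exact ⟨hmα α' hα'm, le_rfl⟩) hα.2).1
  have hc'u : c' (π α' (mα α')) = c α' := by simp only [hc'def]; rw [hfilter, Finset.sum_singleton]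
  have hcne : c α' ≠ 0 := by
    rw [hcdef]
    intro hzero
    apply hα'ne
    apply natCast_zmod_inj hq (dig_lt hq p α') (dig_lt hq p' α')
    have := sub_eq_zero.mp hzero
    exact this
  rw [hc'u]
  have : ∀ x : ℕ, ec q (c α' * (x : ZMod q)) = ec q ((x : ZMod q) * c α') := by
    intro x; rw [mul_comm]
  simp only [this]
  exact geom_zero hq hcne

def allEq (q d c₁ c₂ : ℕ) (π : ℕ → ℕ → ℕ) (i : ℕ) : Prop :=
  ∀ α ∈ Finset.Icc 1 d, dig q (i + c₁) (π α 1) = dig q (i + c₂) (π α 1)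

instance allEq.dec (q d c₁ c₂ : ℕ) (π : ℕ → ℕ → ℕ) : DecidablePred (allEq q d c₁ c₂ π) :=
  fun _ => Finset.decidableDforallFinset

lemma allEq_iff {q d c₁ c₂ : ℕ} {π : ℕ → ℕ → ℕ} {i : ℕ} : allEq q d c₁ c₂ π i ↔
    ∀ α ∈ Finset.Icc 1 d, dig q (i + c₁) (π α 1) = dig q (i + c₂) (π α 1) := Iff.rfl

lemma sum_ec_tpos (q m d : ℕ) (hq : 2 ≤ q) (mα : ℕ → ℕ)
    (hmα : ∀ α ∈ Finset.Icc 1 d, 1 ≤ mα α)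
    (hsum : ∑ α ∈ Finset.Icc 1 d, mα α = m)
    (π : ℕ → ℕ → ℕ)
    (hrange : ∀ α ∈ Finset.Icc 1 d, ∀ β ∈ Finset.Icc 1 (mα α), π α β ∈ Finset.Icc 1 m)
    (hinj : ∀ α ∈ Finset.Icc 1 d, ∀ β ∈ Finset.Icc 1 (mα α), ∀ α' ∈ Finset.Icc 1 d,
      ∀ β' ∈ Finset.Icc 1 (mα α'), π α β = π α' β' → α = α' ∧ β = β')
    (a : ℕ → ℕ → ℕ)
    (hacop : ∀ α ∈ Finset.Icc 1 d, ∀ β ∈ Finset.Icc 1 (mα α - 1), Nat.Coprime (a α β) q)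
    (h : ℕ → ℕ → ZMod q) (h0 : ZMod q)
    (p p' t c₁ c₂ : ℕ) (ht0 : t ≠ 0) (ht : t < q ^ m)
    (hc : (c₁ = 0 ∧ c₂ = t) ∨ (c₁ = t ∧ c₂ = 0)) :
    ∑ i ∈ (Finset.range (q ^ m - t)).filter (allEq q d c₁ c₂ π),
      ec q (fpn q m d mα π a h h0 p 0 (i + c₁) - fpn q m d mα π a h h0 p' 0 (i + c₂)) = 0 := by
  set S := (Finset.range (q ^ m - t)).filter (allEq q d c₁ c₂ π) with hS
  have hct : c₁ + c₂ = t := by rcases hc with ⟨h1, h2⟩ | ⟨h1, h2⟩ <;> omega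
  have hc0 : c₁ = 0 ∨ c₂ = 0 := by rcases hc with ⟨h1, h2⟩ | ⟨h1, h2⟩; exacts [Or.inl h1, Or.inr h2]
  let A0 : ℕ → ℕ := fun i => apos q d mα π (i + c₁) (i + c₂)
  let B0 : ℕ → ℕ := fun i => bpos q d mα π (i + c₁) (i + c₂)
  let W : ℕ → ℕ := fun i => wpos q d mα π (i + c₁) (i + c₂)
  let ρ : ℕ → ℕ := fun i => rep q i (W i) 0
  have hWdef : ∀ i, W i = π (A0 i) (B0 i - 1) := fun i => rfl
  have hA0 : ∀ i, A0 i = apos q d mα π (i + c₁) (i + c₂) := fun i => rfl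
  have hB0 : ∀ i, B0 i = bpos q d mα π (i + c₁) (i + c₂) := fun i => rfl
  have hWx : ∀ i, W i = wpos q d mα π (i + c₁) (i + c₂) := fun i => rfl
  have hρx : ∀ i, ρ i = rep q i (W i) 0 := fun i => rfl
  have hmemS : ∀ i, i ∈ S ↔ (i < q ^ m - t ∧
      ∀ α ∈ Finset.Icc 1 d, dig q (i + c₁) (π α 1) = dig q (i + c₂) (π α 1)) := by
    intro i; rw [hS, Finset.mem_filter, Finset.mem_range, allEq_iff]
  have hane : ∀ i ∈ S, (aset q d mα π (i + c₁) (i + c₂)).Nonempty := by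
    intro i hi
    rw [hmemS] at hi
    have hI : i + c₁ < q ^ m := by omega
    have hJ : i + c₂ < q ^ m := by omega
    have hne : i + c₁ ≠ i + c₂ := by omega
    have hex : ∃ k, 1 ≤ k ∧ k ≤ m ∧ dig q (i + c₁) k ≠ dig q (i + c₂) k := by
      by_contra hcon
      push_neg at hcon
      exact hne (digits_inj hq m _ _ hI hJ (fun k h1 h2 => hcon k h1 h2))
    obtain ⟨k, hk1, hk2, hkne⟩ := hex
    obtain ⟨α, hα, β, hβ, hπ⟩ := pi_surj hsum hrange hinj k (by rw [Finset.mem_Icc]; omega)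
    exact aset_nonempty_of hα hβ (by rw [hπ]; exact hkne)
  have hB2 : ∀ i ∈ S, 2 ≤ B0 i := by
    intro i hi
    have h1 := bpos_Icc (hane i hi)
    have h2 := bpos_ne (hane i hi)
    rw [Finset.mem_Icc] at h1
    by_contra hcon
    rw [hB0] at hcon
    have hb1 : bpos q d mα π (i + c₁) (i + c₂) = 1 := by omega
    apply h2
    rw [hb1]
    exact ((hmemS i).mp hi).2 _ (apos_Icc (hane i hi))
  have hdigW : ∀ i ∈ S, dig q (i + c₁) (W i) = dig q (i + c₂) (W i) := by
    intro i hi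
    have hne := hane i hi
    have h1 := bpos_Icc hne
    rw [Finset.mem_Icc] at h1
    have hb2 := hB2 i hi
    rw [hB0] at hb2
    exact bpos_min hne (bpos q d mα π (i + c₁) (i + c₂) - 1)
      (by rw [Finset.mem_Icc]; constructor <;> omega) (by omega)
  have hdigWi : ∀ i ∈ S, dig q i (W i) = dig q (i + c₁) (W i) ∧
      dig q i (W i) = dig q (i + c₂) (W i) := by
    intro i hi
    have hd := hdigW i hi
    rcases hc0 with h1 | h1
    · have e1 : i + c₁ = i := by omega
      rw [e1] at hd ⊢
      exact ⟨rfl, hd⟩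
    · have e1 : i + c₂ = i := by omega
      rw [e1] at hd ⊢
      exact ⟨hd.symm, rfl⟩
  have hWm : ∀ i ∈ S, 1 ≤ W i ∧ W i ≤ m := by
    intro i hi
    have hne := hane i hi
    have h2 := bpos_Icc hne
    rw [Finset.mem_Icc] at h2
    have hb2 := hB2 i hi
    rw [hB0] at hb2
    have hre := hrange _ (apos_Icc hne) (bpos q d mα π (i + c₁) (i + c₂) - 1)
      (by rw [Finset.mem_Icc]; constructor <;> omega)
    rw [Finset.mem_Icc] at hre
    exact hre
  have hrep_c : ∀ i ∈ S, ∀ y : ℕ, rep q i (W i) y + c₁ = rep q (i + c₁) (W i) y ∧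
      rep q i (W i) y + c₂ = rep q (i + c₂) (W i) y := by
    intro i hi y
    have hw1 := (hWm i hi).1
    have hdi := hdigWi i hi
    exact ⟨rep_add hq i c₁ (W i) y hw1 hdi.1, rep_add hq i c₂ (W i) y hw1 hdi.2⟩
  have hclose : ∀ i ∈ S, ∀ y : ℕ, y < q → rep q i (W i) y ∈ S := by
    intro i hi y hy
    have hw := hWm i hi
    have hrc := hrep_c i hi y
    have hiS := (hmemS i).mp hi
    rw [hmemS]
    constructor
    · have h1 : rep q i (W i) y + t < q ^ m := by
        rcases hc0 with h1 | h1
        · have e2 : rep q (i + c₂) (W i) y < q ^ m :=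
            rep_lt hq (show i + c₂ < q ^ m by omega) hw.1 hw.2 hy
          omega
        · have e2 : rep q (i + c₁) (W i) y < q ^ m :=
            rep_lt hq (show i + c₁ < q ^ m by omega) hw.1 hw.2 hy
          omega
      omega
    · intro α hα
      have hπ1 := hrange α hα 1 (by rw [Finset.mem_Icc]; exact ⟨le_rfl, hmα α hα⟩)
      rw [Finset.mem_Icc] at hπ1
      rw [hrc.1, hrc.2]
      by_cases he : π α 1 = W i
      · rw [he, dig_rep_self hq _ _ _ hw.1 hy, dig_rep_self hq _ _ _ hw.1 hy]
      · rw [dig_rep_ne hq _ _ _ _ hw.1 hy hπ1.1 he, dig_rep_ne hq _ _ _ _ hw.1 hy hπ1.1 he]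
        exact hiS.2 α hα
  have hinv : ∀ i ∈ S, ∀ y : ℕ, y < q → A0 (rep q i (W i) y) = A0 i ∧
      B0 (rep q i (W i) y) = B0 i ∧ W (rep q i (W i) y) = W i := by
    intro i hi y hy
    have hw := hWm i hi
    have hrc := hrep_c i hi y
    have hpat : ∀ α ∈ Finset.Icc 1 d, ∀ β ∈ Finset.Icc 1 (mα α),
        (dig q (rep q i (W i) y + c₁) (π α β) = dig q (rep q i (W i) y + c₂) (π α β) ↔
          dig q (i + c₁) (π α β) = dig q (i + c₂) (π α β)) := by
      intro α hα β hβ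
      have hπ := hrange α hα β hβ
      rw [Finset.mem_Icc] at hπ
      rw [hrc.1, hrc.2]
      by_cases he : π α β = W i
      · rw [he, dig_rep_self hq _ _ _ hw.1 hy, dig_rep_self hq _ _ _ hw.1 hy]
        exact ⟨fun _ => hdigW i hi, fun _ => rfl⟩
      · rw [dig_rep_ne hq _ _ _ _ hw.1 hy hπ.1 he, dig_rep_ne hq _ _ _ _ hw.1 hy hπ.1 he]
    have hrepS := hclose i hi y hy
    exact wpos_congr hpat (hane _ hrepS)
  -- now the fiberwise argument
  rw [← Finset.sum_fiberwise_of_maps_to (g := ρ) (t := S)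
    (fun i hi => hclose i hi 0 (by omega))
    (fun i => ec q (fpn q m d mα π a h h0 p 0 (i + c₁) - fpn q m d mα π a h h0 p' 0 (i + c₂)))]
  apply Finset.sum_eq_zero
  intro r hr
  by_cases hρr : ρ r = r
  · -- main fiber
    have hwr := hWm r hr
    have hr0 : dig q r (W r) = 0 := by
      have hds := dig_rep_self hq r (W r) 0 hwr.1 (by omega)
      have : ρ r = rep q r (W r) 0 := rfl
      rw [← this, hρr] at hds
      exact hds
    have hfiber : S.filter (fun i => ρ i = r) =
        (Finset.range q).image (fun y => rep q r (W r) y) := by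
      ext i
      simp only [Finset.mem_filter, Finset.mem_image, Finset.mem_range]
      constructor
      · rintro ⟨hiS, hρi⟩
        refine ⟨dig q i (W i), dig_lt hq i (W i), ?_⟩
        have hWi : W (rep q i (W i) 0) = W i := (hinv i hiS 0 (by omega)).2.2
        have hρdef : ρ i = rep q i (W i) 0 := rfl
        have hWr : W r = W i := by rw [← hρi, hρdef]; exact hWi
        rw [hWr, ← hρi, hρdef, rep_rep hq i (W i) 0 _ (hWm i hiS).1 (by omega)]
        exact rep_dig_eq hq i (W i) (hWm i hiS).1
      · rintro ⟨y, hy, rfl⟩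
        have hiS := hclose r hr y hy
        refine ⟨hiS, ?_⟩
        have hWeq : W (rep q r (W r) y) = W r := (hinv r hr y hy).2.2
        have hρdef : ρ (rep q r (W r) y) = rep q (rep q r (W r) y) (W (rep q r (W r) y)) 0 := rfl
        rw [hρdef, hWeq, rep_rep hq r (W r) y 0 hwr.1 hy]
        exact hρr
    rw [hfiber, Finset.sum_image (by
      intro y1 hy1 y2 hy2 he
      rw [Finset.mem_coe, Finset.mem_range] at hy1 hy2
      have e1 := dig_rep_self hq r (W r) y1 hwr.1 hy1
      have e2 := dig_rep_self hq r (W r) y2 hwr.1 hy2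
      rw [show rep q r (W r) y1 = rep q r (W r) y2 from he] at e1
      exact e1.symm.trans e2)]
    -- compute the terms
    have hnea := hane r hr
    set A' : ZMod q := (a (A0 r) (B0 r - 1) : ZMod q) *
      ((dig q (r + c₁) (π (A0 r) (B0 r)) : ZMod q) -
        (dig q (r + c₂) (π (A0 r) (B0 r)) : ZMod q)) with hA'
    have hX0 : dig q (r + c₁) (π (A0 r) (B0 r - 1)) = 0 := by
      rw [← hWdef r]
      rw [← (hdigWi r hr).1]
      exact hr0
    have hY0 : dig q (r + c₂) (π (A0 r) (B0 r - 1)) = 0 := by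
      rw [← hWdef r]
      rw [← (hdigWi r hr).2]
      exact hr0
    have hBv : ∀ y : ℕ, y < q →
        fpn q m d mα π a h h0 p 0 (rep q r (W r) y + c₁)
          - fpn q m d mα π a h h0 p' 0 (rep q r (W r) y + c₂)
        = (fpn q m d mα π a h h0 p 0 (r + c₁) - fpn q m d mα π a h h0 p' 0 (r + c₂))
          + (y : ZMod q) * A' := by
      intro y hy
      have hrc := hrep_c r hr y
      rw [hrc.1, hrc.2, hWdef r]
      have := fpn_rep_diff q m d hq mα π a h h0 hmα hrange hinj p p' (r + c₁) (r + c₂)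
        (A0 r) (B0 r) y (apos_Icc hnea) (bpos_Icc hnea) (hB2 r hr)
        (bpos_min hnea) hy hX0 hY0
      rw [hA']
      linear_combination this
    have hA'ne : A' ≠ 0 := by
      have hb := bpos_Icc hnea
      rw [Finset.mem_Icc] at hb
      rw [← hB0 r, ← hA0 r] at hb
      have hb2 := hB2 r hr
      have hcop := hacop (A0 r) (apos_Icc hnea) (B0 r - 1)
        (by rw [Finset.mem_Icc]; constructor <;> omega)
      have hdne : (dig q (r + c₁) (π (A0 r) (B0 r)) : ZMod q) ≠
          (dig q (r + c₂) (π (A0 r) (B0 r)) : ZMod q) := by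
        intro he
        exact bpos_ne hnea (natCast_zmod_inj hq (dig_lt hq _ _) (dig_lt hq _ _) he)
      rw [hA']
      intro hzero
      have hu : IsUnit ((a (A0 r) (B0 r - 1) : ZMod q)) := by
        have := (ZMod.unitOfCoprime _ hcop).isUnit
        rwa [ZMod.coe_unitOfCoprime] at this
      rw [hu.mul_right_eq_zero] at hzero
      exact hdne (sub_eq_zero.mp hzero)
    calc ∑ y ∈ Finset.range q,
          ec q (fpn q m d mα π a h h0 p 0 (rep q r (W r) y + c₁)
            - fpn q m d mα π a h h0 p' 0 (rep q r (W r) y + c₂))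
        = ∑ y ∈ Finset.range q,
            ec q (fpn q m d mα π a h h0 p 0 (r + c₁) - fpn q m d mα π a h h0 p' 0 (r + c₂))
              * ec q ((y : ZMod q) * A') := by
          apply Finset.sum_congr rfl
          intro y hy
          rw [Finset.mem_range] at hy
          rw [hBv y hy, ec_add hq]
      _ = ec q (fpn q m d mα π a h h0 p 0 (r + c₁) - fpn q m d mα π a h h0 p' 0 (r + c₂))
            * ∑ y ∈ Finset.range q, ec q ((y : ZMod q) * A') := by rw [← Finset.mul_sum]
      _ = 0 := by rw [geom_zero hq hA'ne, mul_zero]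
  · -- empty fiber
    have hempty : S.filter (fun i => ρ i = r) = ∅ := by
      rw [Finset.filter_eq_empty_iff]
      intro i hi hρi
      apply hρr
      have hWi : W (rep q i (W i) 0) = W i := (hinv i hi 0 (by omega)).2.2
      have hρdef : ρ i = rep q i (W i) 0 := rfl
      rw [← hρi, hρdef]
      show rep q (rep q i (W i) 0) (W (rep q i (W i) 0)) 0 = rep q i (W i) 0
      rw [hWi]
      exact rep_rep hq i (W i) 0 0 (hWm i hi).1 (by omega)
    rw [hempty, Finset.sum_empty]

lemma main_sum (q m d : ℕ) (hq : 2 ≤ q) (mα : ℕ → ℕ)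
    (hmα : ∀ α ∈ Finset.Icc 1 d, 1 ≤ mα α)
    (hsum : ∑ α ∈ Finset.Icc 1 d, mα α = m)
    (π : ℕ → ℕ → ℕ)
    (hrange : ∀ α ∈ Finset.Icc 1 d, ∀ β ∈ Finset.Icc 1 (mα α), π α β ∈ Finset.Icc 1 m)
    (hinj : ∀ α ∈ Finset.Icc 1 d, ∀ β ∈ Finset.Icc 1 (mα α), ∀ α' ∈ Finset.Icc 1 d,
      ∀ β' ∈ Finset.Icc 1 (mα α'), π α β = π α' β' → α = α' ∧ β = β')
    (a : ℕ → ℕ → ℕ)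
    (hacop : ∀ α ∈ Finset.Icc 1 d, ∀ β ∈ Finset.Icc 1 (mα α - 1), Nat.Coprime (a α β) q)
    (h : ℕ → ℕ → ZMod q) (h0 : ZMod q)
    (p p' t c₁ c₂ : ℕ) (hp : p < q ^ d) (hp' : p' < q ^ d) (ht : t < q ^ m)
    (hcond : t ≠ 0 ∨ p ≠ p')
    (hc : (c₁ = 0 ∧ c₂ = t) ∨ (c₁ = t ∧ c₂ = 0)) :
    ∑ n ∈ Finset.range (q ^ d), ∑ i ∈ Finset.range (q ^ m - t),
      ec q (fpn q m d mα π a h h0 p n (i + c₁) - fpn q m d mα π a h h0 p' n (i + c₂)) = 0 := by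
  have decomp : ∀ P nn j, fpn q m d mα π a h h0 P nn j = fpn q m d mα π a h h0 P 0 j
      + ∑ α ∈ Finset.Icc 1 d, (dig q nn α : ZMod q) * (dig q j (π α 1) : ZMod q) := by
    intro P nn j
    rw [fpn, fpn]
    have hz : ∑ α ∈ Finset.Icc 1 d, (dig q 0 α : ZMod q) * (dig q j (π α 1) : ZMod q) = 0 :=
      Finset.sum_eq_zero (fun α _ => by simp [dig])
    rw [hz]
    ring
  rw [Finset.sum_comm]
  have hterm : ∀ i, ∑ n ∈ Finset.range (q ^ d),
      ec q (fpn q m d mα π a h h0 p n (i + c₁) - fpn q m d mα π a h h0 p' n (i + c₂))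
      = ec q (fpn q m d mα π a h h0 p 0 (i + c₁) - fpn q m d mα π a h h0 p' 0 (i + c₂)) *
        ∏ α ∈ Finset.Icc 1 d, ∑ x ∈ Finset.range q,
          ec q ((x : ZMod q) * ((dig q (i + c₁) (π α 1) : ZMod q)
            - (dig q (i + c₂) (π α 1) : ZMod q))) := by
    intro i
    have hsplit : ∀ n : ℕ, fpn q m d mα π a h h0 p n (i + c₁) - fpn q m d mα π a h h0 p' n (i + c₂)
        = (fpn q m d mα π a h h0 p 0 (i + c₁) - fpn q m d mα π a h h0 p' 0 (i + c₂))
          + ∑ α ∈ Finset.Icc 1 d, (dig q n α : ZMod q) *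
            ((dig q (i + c₁) (π α 1) : ZMod q) - (dig q (i + c₂) (π α 1) : ZMod q)) := by
      intro n
      rw [decomp p n, decomp p' n]
      have hd : (∑ α ∈ Finset.Icc 1 d, (dig q n α : ZMod q) * (dig q (i + c₁) (π α 1) : ZMod q))
          - (∑ α ∈ Finset.Icc 1 d, (dig q n α : ZMod q) * (dig q (i + c₂) (π α 1) : ZMod q))
          = ∑ α ∈ Finset.Icc 1 d, (dig q n α : ZMod q) *
            ((dig q (i + c₁) (π α 1) : ZMod q) - (dig q (i + c₂) (π α 1) : ZMod q)) := by
        rw [← Finset.sum_sub_distrib]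
        exact Finset.sum_congr rfl fun α _ => by ring
      linear_combination hd
    calc ∑ n ∈ Finset.range (q ^ d),
          ec q (fpn q m d mα π a h h0 p n (i + c₁) - fpn q m d mα π a h h0 p' n (i + c₂))
        = ∑ n ∈ Finset.range (q ^ d),
            ec q (fpn q m d mα π a h h0 p 0 (i + c₁) - fpn q m d mα π a h h0 p' 0 (i + c₂)) *
            ∏ α ∈ Finset.Icc 1 d, ec q ((dig q n α : ZMod q) *
              ((dig q (i + c₁) (π α 1) : ZMod q) - (dig q (i + c₂) (π α 1) : ZMod q))) := by
          apply Finset.sum_congr rfl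
          intro n _
          rw [hsplit n, ec_add hq, ec_sum hq]
      _ = ec q (fpn q m d mα π a h h0 p 0 (i + c₁) - fpn q m d mα π a h h0 p' 0 (i + c₂)) *
          ∑ n ∈ Finset.range (q ^ d), ∏ α ∈ Finset.Icc 1 d,
            ec q ((dig q n α : ZMod q) *
              ((dig q (i + c₁) (π α 1) : ZMod q) - (dig q (i + c₂) (π α 1) : ZMod q))) := by
          rw [Finset.mul_sum]
      _ = _ := by
          rw [digit_prod_sum hq d (fun α x => ec q ((x : ZMod q) *
            ((dig q (i + c₁) (π α 1) : ZMod q) - (dig q (i + c₂) (π α 1) : ZMod q))))]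
  simp only [hterm]
  rw [← Finset.sum_filter_add_sum_filter_not (Finset.range (q ^ m - t)) (allEq q d c₁ c₂ π)]
  have hnot : ∑ i ∈ (Finset.range (q ^ m - t)).filter (fun i => ¬ allEq q d c₁ c₂ π i),
      ec q (fpn q m d mα π a h h0 p 0 (i + c₁) - fpn q m d mα π a h h0 p' 0 (i + c₂)) *
        ∏ α ∈ Finset.Icc 1 d, ∑ x ∈ Finset.range q,
          ec q ((x : ZMod q) * ((dig q (i + c₁) (π α 1) : ZMod q)
            - (dig q (i + c₂) (π α 1) : ZMod q))) = 0 := by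
    apply Finset.sum_eq_zero
    intro i hi
    rw [Finset.mem_filter] at hi
    have : ∃ α ∈ Finset.Icc 1 d, dig q (i + c₁) (π α 1) ≠ dig q (i + c₂) (π α 1) := by
      by_contra hcon
      push_neg at hcon
      exact hi.2 (fun α hα => hcon α hα)
    obtain ⟨α, hα, hne⟩ := this
    have hAne : (dig q (i + c₁) (π α 1) : ZMod q) - (dig q (i + c₂) (π α 1) : ZMod q) ≠ 0 := by
      intro hzero
      exact hne (natCast_zmod_inj hq (dig_lt hq _ _) (dig_lt hq _ _) (sub_eq_zero.mp hzero))
    rw [Finset.prod_eq_zero hα (geom_zero hq hAne), mul_zero]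
  rw [hnot, add_zero]
  have hyes : ∀ i ∈ (Finset.range (q ^ m - t)).filter (allEq q d c₁ c₂ π),
      ec q (fpn q m d mα π a h h0 p 0 (i + c₁) - fpn q m d mα π a h h0 p' 0 (i + c₂)) *
        ∏ α ∈ Finset.Icc 1 d, ∑ x ∈ Finset.range q,
          ec q ((x : ZMod q) * ((dig q (i + c₁) (π α 1) : ZMod q)
            - (dig q (i + c₂) (π α 1) : ZMod q)))
      = ec q (fpn q m d mα π a h h0 p 0 (i + c₁) - fpn q m d mα π a h h0 p' 0 (i + c₂))
          * (q : ℂ) ^ d := by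
    intro i hi
    rw [Finset.mem_filter] at hi
    congr 1
    have : ∀ α ∈ Finset.Icc 1 d, ∑ x ∈ Finset.range q,
        ec q ((x : ZMod q) * ((dig q (i + c₁) (π α 1) : ZMod q)
          - (dig q (i + c₂) (π α 1) : ZMod q))) = (q : ℂ) := by
      intro α hα
      have hz : (dig q (i + c₁) (π α 1) : ZMod q) - (dig q (i + c₂) (π α 1) : ZMod q) = 0 := by
        rw [hi.2 α hα]; ring
      rw [hz]
      simp only [mul_zero, ec_zero hq]
      rw [Finset.sum_const, Finset.card_range, nsmul_eq_mul, mul_one]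
    rw [Finset.prod_congr rfl this, Finset.prod_const, Nat.card_Icc]
    norm_num
  rw [Finset.sum_congr rfl hyes, ← Finset.sum_mul]
  have hqd : ((q : ℂ)) ^ d ≠ 0 := pow_ne_zero _ (by exact_mod_cast (by omega : q ≠ 0))
  rcases Nat.eq_zero_or_pos t with ht0 | htpos
  · -- t = 0
    subst ht0
    have hpp : p ≠ p' := by
      rcases hcond with hcon | hcon
      · exact absurd rfl hcon
      · exact hcon
    have hc12 : c₁ = 0 ∧ c₂ = 0 := by rcases hc with ⟨h1, h2⟩ | ⟨h1, h2⟩ <;> exact ⟨by omega, by omega⟩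
    obtain ⟨rfl, rfl⟩ := hc12
    have hfilter : (Finset.range (q ^ m - 0)).filter (allEq q d 0 0 π) = Finset.range (q ^ m) := by
      rw [Nat.sub_zero]
      apply Finset.filter_true_of_mem
      intro i _
      rw [allEq_iff]
      intro α _
      rfl
    rw [hfilter]
    have := sum_ec_t0 q m d hq mα hmα π hrange hinj a h h0 p p' hp hp' hpp
    simp only [Nat.add_zero] at *
    rw [this, zero_mul]
  · have := sum_ec_tpos q m d hq mα hmα hsum π hrange hinj a hacop h h0 p p' t c₁ c₂
      (by omega) ht hc
    rw [this, zero_mul]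
/-- Theorem 8: the family `{F^0,…,F^{q^d-1}}` is a `(q^d, q^d, q^m)`-CCC. -/
theorem stmt10 (q m d : ℕ) (hq : 2 ≤ q) (hm : 2 ≤ m) (hd : 2 ≤ d) (hdm : d < m)
    (mα : ℕ → ℕ) (hmα : ∀ α ∈ Finset.Icc 1 d, 1 ≤ mα α)
    (hsum : ∑ α ∈ Finset.Icc 1 d, mα α = m)
    (π : ℕ → ℕ → ℕ)
    (hrange : ∀ α ∈ Finset.Icc 1 d, ∀ β ∈ Finset.Icc 1 (mα α), π α β ∈ Finset.Icc 1 m)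
    (hinj : ∀ α ∈ Finset.Icc 1 d, ∀ β ∈ Finset.Icc 1 (mα α), ∀ α' ∈ Finset.Icc 1 d,
      ∀ β' ∈ Finset.Icc 1 (mα α'), π α β = π α' β' → α = α' ∧ β = β')
    (a : ℕ → ℕ → ℕ)
    (hacop : ∀ α ∈ Finset.Icc 1 d, ∀ β ∈ Finset.Icc 1 (mα α - 1), Nat.Coprime (a α β) q)
    (h : ℕ → ℕ → ZMod q) (h0 : ZMod q) :
    ∀ p < q ^ d, ∀ p' < q ^ d, ∀ τ : ℤ, |τ| ≤ (q : ℤ) ^ m - 1 → (p ≠ p' ∨ τ ≠ 0) →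
      ∑ n ∈ Finset.range (q ^ d),
        Rq q (q ^ m) (fpn q m d mα π a h h0 p n) (fpn q m d mα π a h h0 p' n) τ = 0 := by

  intro p hp p' hp' τ hτ hne
  have hqm : ((q ^ m : ℕ) : ℤ) = (q : ℤ) ^ m := by push_cast; ring
  by_cases hτ0 : 0 ≤ τ
  · simp only [Rq, if_pos hτ0]
    have habs : τ ≤ (q : ℤ) ^ m - 1 := le_trans (le_abs_self τ) hτ
    have ht : τ.toNat < q ^ m := by omega
    have hcond : τ.toNat ≠ 0 ∨ p ≠ p' := by
      rcases hne with hpp | hττ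
      · right; exact hpp
      · left; omega
    have hmain := main_sum q m d hq mα hmα hsum π hrange hinj a hacop h h0 p p'
      τ.toNat 0 τ.toNat hp hp' ht hcond (Or.inl ⟨rfl, rfl⟩)
    simp only [Nat.add_zero] at hmain
    exact hmain
  · simp only [Rq, if_neg hτ0]
    have habs : -τ ≤ (q : ℤ) ^ m - 1 := le_trans (neg_le_abs τ) hτ
    have ht : (-τ).toNat < q ^ m := by omega
    have hcond : (-τ).toNat ≠ 0 ∨ p ≠ p' := by left; omega
    have hmain := main_sum q m d hq mα hmα hsum π hrange hinj a hacop h h0 p p'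
      (-τ).toNat (-τ).toNat 0 hp hp' ht hcond (Or.inr ⟨rfl, rfl⟩)
    simp only [Nat.add_zero] at hmain
    exact hmain
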